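/- Let μ ∈ ℝ and Δ = 1/2 + iμ. Then for all integers n, m ∈ ℤ, the integral ∫_ℝ conj(ψ_n^{(Δ)}(x)) · ψ_m^{(Δ)}(x) dx converges absolutely and equals 1 if n = m and 0 otherwise. -/

import Mathlib

open Complex MeasureTheory

/-- The basis wavefunction `ψ_n^{(Δ)}(x) = (2π)^{-1/2} ((1-ix)/(1+ix))^n 2^Δ (1+x²)^{-Δ}`,
with complex powers on the principal branch. -/
noncomputable def psi (Δ : ℂ) (n : ℤ) (x : ℝ) : ℂ :=
  ((Real.sqrt (2 * Real.pi) : ℂ))⁻¹ * ((1 - Complex.I * x) / (1 + Complex.I * x)) ^ n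
    * (2 : ℂ) ^ Δ * ((1 : ℂ) + (x : ℂ) ^ 2) ^ (-Δ)

open Filter Topology

noncomputable def gph (x : ℝ) : ℂ := (1 - Complex.I * x) / (1 + Complex.I * x)

lemma hne1 (x : ℝ) : (1 : ℂ) + Complex.I * x ≠ 0 := by
  intro h
  have := congrArg Complex.re h
  simp at this

lemma hne2 (x : ℝ) : (1 : ℂ) - Complex.I * x ≠ 0 := by
  intro h
  have := congrArg Complex.re h
  simp at this

lemma gph_ne (x : ℝ) : gph x ≠ 0 := div_ne_zero (hne2 x) (hne1 x)

lemma mulConjEq (x : ℝ) : ((1:ℂ) - Complex.I * x) * (1 + Complex.I * x) = (1:ℂ) + (x:ℂ)^2 := by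
  linear_combination (-(x:ℂ)^2) * Complex.I_sq

lemma one_add_sq_ne (x : ℝ) : ((1:ℂ) + (x:ℂ)^2) ≠ 0 := by
  rw [← mulConjEq]
  exact mul_ne_zero (hne2 x) (hne1 x)

lemma habs (x : ℝ) : ‖gph x‖ = 1 := by
  rw [gph, norm_div]
  have h1 : ‖1 - Complex.I * x‖ = Real.sqrt (1 + x^2) := by
    rw [Complex.norm_def, Complex.normSq_apply]
    simp
    ring_nf
  have h2 : ‖1 + Complex.I * x‖ = Real.sqrt (1 + x^2) := by
    rw [Complex.norm_def, Complex.normSq_apply]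
    simp
    ring_nf
  rw [h1, h2, div_self]
  positivity

lemma hasDerivAt_gph (x : ℝ) :
    HasDerivAt gph (-2 * Complex.I / (1 + Complex.I * x)^2) x := by
  have hnum : HasDerivAt (fun y : ℝ => (1 : ℂ) - Complex.I * y) (-Complex.I) x := by
    have : HasDerivAt (fun z : ℂ => (1 : ℂ) - Complex.I * z) (-Complex.I) (x : ℂ) := by
      simpa using ((hasDerivAt_id (x:ℂ)).const_mul Complex.I).const_sub 1
    exact this.comp_ofReal
  have hden : HasDerivAt (fun y : ℝ => (1 : ℂ) + Complex.I * y) (Complex.I) x := by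
    have : HasDerivAt (fun z : ℂ => (1 : ℂ) + Complex.I * z) (Complex.I) (x : ℂ) := by
      simpa using ((hasDerivAt_id (x:ℂ)).const_mul Complex.I).const_add 1
    exact this.comp_ofReal
  have := hnum.div hden (hne1 x)
  refine this.congr_deriv ?_
  symm
  field_simp
  ring

lemma hasDerivAt_gph_zpow (k : ℤ) (x : ℝ) :
    HasDerivAt (fun y : ℝ => gph y ^ k)
      ((k : ℂ) * gph x ^ k * (-2 * Complex.I) * ((1:ℂ) + (x:ℂ)^2)⁻¹) x := by
  have h := (hasDerivAt_zpow k (gph x) (Or.inl (gph_ne x))).comp x (hasDerivAt_gph x)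
  refine h.congr_deriv ?_
  symm
  rw [zpow_sub_one₀ (gph_ne x)]
  have hg : (gph x)⁻¹ * (-2 * Complex.I / (1 + Complex.I * x)^2)
      = (-2 * Complex.I) * ((1:ℂ) + (x:ℂ)^2)⁻¹ := by
    rw [gph, inv_div, ← mulConjEq x]
    have h1 := hne1 x
    have h2 := hne2 x
    field_simp
  linear_combination (-(k:ℂ) * gph x ^ k) * hg

lemma tendsto_gph_top : Tendsto gph atTop (𝓝 (-1)) := by
  have key : Tendsto (fun x : ℝ => (((x:ℂ))⁻¹ - Complex.I) / ((x:ℂ)⁻¹ + Complex.I)) atTop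
      (𝓝 (-1)) := by
    have hr : Tendsto (fun x : ℝ => ((x:ℂ))⁻¹) atTop (𝓝 0) := by
      have := (Complex.continuous_ofReal.tendsto 0).comp (tendsto_inv_atTop_zero (𝕜 := ℝ))
      simpa [Function.comp_def] using this
    have hnum : Tendsto (fun x : ℝ => ((x:ℂ))⁻¹ - Complex.I) atTop (𝓝 (-Complex.I)) := by
      simpa using hr.sub tendsto_const_nhds
    have hden : Tendsto (fun x : ℝ => ((x:ℂ))⁻¹ + Complex.I) atTop (𝓝 (Complex.I)) := by
      simpa using hr.add tendsto_const_nhds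
    have := hnum.div hden Complex.I_ne_zero
    convert this using 2
    · rfl
    · rw [neg_div, div_self Complex.I_ne_zero]
  refine key.congr' ?_
  filter_upwards [eventually_gt_atTop (0:ℝ)] with x hx
  have hx0 : (x:ℂ) ≠ 0 := by exact_mod_cast ne_of_gt hx
  have hden' : ((x:ℂ))⁻¹ + Complex.I ≠ 0 := by
    intro h
    have := congrArg Complex.im h
    simp at this
  rw [gph, div_eq_div_iff hden' (hne1 x)]
  field_simp

lemma tendsto_gph_bot : Tendsto gph atBot (𝓝 (-1)) := by
  have key : Tendsto (fun x : ℝ => (((x:ℂ))⁻¹ - Complex.I) / ((x:ℂ)⁻¹ + Complex.I)) atBot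
      (𝓝 (-1)) := by
    have hr : Tendsto (fun x : ℝ => ((x:ℂ))⁻¹) atBot (𝓝 0) := by
      have hrr : Tendsto (fun x : ℝ => x⁻¹) atBot (𝓝 0) := by
        have := ((tendsto_inv_atTop_zero (𝕜 := ℝ)).comp tendsto_neg_atBot_atTop).neg
        simp only [Function.comp_def] at this
        simpa [inv_neg] using this
      have := (Complex.continuous_ofReal.tendsto 0).comp hrr
      simpa [Function.comp_def] using this
    have hnum : Tendsto (fun x : ℝ => ((x:ℂ))⁻¹ - Complex.I) atBot (𝓝 (-Complex.I)) := by
      simpa using hr.sub tendsto_const_nhds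
    have hden : Tendsto (fun x : ℝ => ((x:ℂ))⁻¹ + Complex.I) atBot (𝓝 (Complex.I)) := by
      simpa using hr.add tendsto_const_nhds
    have := hnum.div hden Complex.I_ne_zero
    convert this using 2
    · rfl
    · rw [neg_div, div_self Complex.I_ne_zero]
  refine key.congr' ?_
  filter_upwards [eventually_lt_atBot (0:ℝ)] with x hx
  have hx0 : (x:ℂ) ≠ 0 := by exact_mod_cast ne_of_lt hx
  have hden' : ((x:ℂ))⁻¹ + Complex.I ≠ 0 := by
    intro h
    have := congrArg Complex.im h
    simp at this
  rw [gph, div_eq_div_iff hden' (hne1 x)]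
  field_simp

lemma continuous_gph : Continuous gph :=
  (continuous_const.sub (continuous_const.mul Complex.continuous_ofReal)).div
    (continuous_const.add (continuous_const.mul Complex.continuous_ofReal)) hne1

lemma norm_h (k : ℤ) (x : ℝ) :
    ‖gph x ^ k * ((1:ℂ) + (x:ℂ)^2)⁻¹‖ = (1 + x^2)⁻¹ := by
  rw [norm_mul, norm_inv]
  have h1 : ‖gph x ^ k‖ = 1 := by
    rw [norm_zpow, habs, one_zpow]
  have h2 : ((1:ℂ) + (x:ℂ)^2) = ((1 + x^2 : ℝ) : ℂ) := by push_cast; ring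
  rw [h1, h2, Complex.norm_real, Real.norm_of_nonneg (by positivity), one_mul]

lemma key_integrable (k : ℤ) :
    Integrable (fun x : ℝ => gph x ^ k * ((1:ℂ) + (x:ℂ)^2)⁻¹) := by
  have hcont : Continuous fun x : ℝ => gph x ^ k * ((1:ℂ) + (x:ℂ)^2)⁻¹ := by
    refine (continuous_gph.zpow₀ k fun x => Or.inl (gph_ne x)).mul ?_
    exact (continuous_const.add (Complex.continuous_ofReal.pow 2)).inv₀ one_add_sq_ne
  refine (integrable_inv_one_add_sq.const_mul 1).mono' hcont.aestronglyMeasurable ?_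
  filter_upwards with x
  rw [norm_h]
  simp

lemma key_integral (k : ℤ) :
    (∫ x : ℝ, gph x ^ k * ((1:ℂ) + (x:ℂ)^2)⁻¹) = if k = 0 then (Real.pi : ℂ) else 0 := by
  rcases eq_or_ne k 0 with hk | hk
  · subst hk
    simp only [zpow_zero, one_mul, if_true]
    have : ∀ x : ℝ, ((1:ℂ) + (x:ℂ)^2)⁻¹ = (((1 + x^2)⁻¹ : ℝ) : ℂ) := by
      intro x; push_cast; ring
    rw [integral_congr_ae (Eventually.of_forall this)]
    have h2 := integral_ofReal (𝕜 := ℂ) (f := fun a : ℝ => (1 + a^2)⁻¹)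
      (μ := (volume : Measure ℝ))
    rw [integral_univ_inv_one_add_sq] at h2
    exact h2
  · rw [if_neg hk]
    have hderiv : ∀ x : ℝ, HasDerivAt (fun y : ℝ => Complex.I / (2 * k) * gph y ^ k)
        (gph x ^ k * ((1:ℂ) + (x:ℂ)^2)⁻¹) x := by
      intro x
      have := (hasDerivAt_gph_zpow k x).const_mul (Complex.I / (2 * (k:ℂ)))
      refine this.congr_deriv ?_
      symm
      have hk' : (k : ℂ) ≠ 0 := Int.cast_ne_zero.mpr hk
      rw [div_mul_eq_mul_div, eq_div_iff (by simp [hk'] : (2 * (k:ℂ)) ≠ 0)]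
      linear_combination (2 * (k:ℂ) * gph x ^ k * ((1:ℂ) + (x:ℂ)^2)⁻¹) * Complex.I_sq
    have hlim : Tendsto (fun z : ℂ => Complex.I / (2 * k) * z ^ k) (𝓝 (-1))
        (𝓝 (Complex.I / (2 * k) * (-1) ^ k)) := by
      exact (((continuousAt_zpow₀ (-1 : ℂ) k (Or.inl (by norm_num))).const_smul
        (Complex.I / (2 * (k:ℂ)))).tendsto).congr (fun z => by simp [smul_eq_mul])
    have htop : Tendsto (fun y : ℝ => Complex.I / (2 * k) * gph y ^ k) atTop
        (𝓝 (Complex.I / (2 * k) * (-1) ^ k)) := hlim.comp tendsto_gph_top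
    have hbot : Tendsto (fun y : ℝ => Complex.I / (2 * k) * gph y ^ k) atBot
        (𝓝 (Complex.I / (2 * k) * (-1) ^ k)) := hlim.comp tendsto_gph_bot
    rw [integral_of_hasDerivAt_of_tendsto hderiv (key_integrable k) hbot htop]
    ring

lemma conj_cpow_real (r : ℝ) (hr : 0 < r) (y : ℂ) :
    (starRingEnd ℂ) ((r:ℂ) ^ y) = (r:ℂ) ^ ((starRingEnd ℂ) y) := by
  have harg : Complex.arg (r:ℂ) ≠ Real.pi := by
    rw [Complex.arg_ofReal_of_nonneg hr.le]
    exact Real.pi_ne_zero.symm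
  have := Complex.conj_cpow (r:ℂ) ((starRingEnd ℂ) y) harg
  rw [Complex.conj_ofReal, Complex.conj_conj] at this
  exact this.symm

lemma pointwise (μ : ℝ) (Δ : ℂ) (hΔ : Δ = 1/2 + Complex.I * μ) (n m : ℤ) (x : ℝ) :
    (starRingEnd ℂ) (psi Δ n x) * psi Δ m x
      = (Real.pi : ℂ)⁻¹ * (gph x ^ (m - n) * ((1:ℂ) + (x:ℂ)^2)⁻¹) := by
  have hconj : (starRingEnd ℂ) Δ = 1 - Δ := by
    rw [hΔ]
    simp [Complex.conj_I, Complex.conj_ofReal, map_ofNat]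
    ring
  have hc2 : (starRingEnd ℂ) ((2:ℂ) ^ Δ) = (2:ℂ) ^ ((1:ℂ) - Δ) := by
    rw [show ((2:ℂ)) = ((2:ℝ):ℂ) by norm_num, conj_cpow_real 2 (by norm_num), hconj]
  have hxr : ((1:ℂ) + (x:ℂ)^2) = ((1 + x^2 : ℝ) : ℂ) := by push_cast; ring
  have hcs : (starRingEnd ℂ) (((1:ℂ) + (x:ℂ)^2) ^ (-Δ)) = ((1:ℂ) + (x:ℂ)^2) ^ (-((1:ℂ)-Δ)) := by
    rw [hxr, conj_cpow_real _ (by positivity), map_neg, hconj]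
  have hph : (starRingEnd ℂ) ((((1:ℂ) - Complex.I * x) / (1 + Complex.I * x)) ^ n)
      = gph x ^ (-n) := by
    rw [map_zpow₀]
    have : (starRingEnd ℂ) (((1:ℂ) - Complex.I * x) / (1 + Complex.I * x)) = (gph x)⁻¹ := by
      rw [map_div₀, gph, inv_div]
      simp [Complex.conj_I, Complex.conj_ofReal]
      ring_nf
    rw [this, inv_zpow, ← zpow_neg]
  have hmul2 : (2:ℂ) ^ ((1:ℂ) - Δ) * (2:ℂ) ^ Δ = 2 := by
    rw [← Complex.cpow_add _ _ (two_ne_zero)]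
    simp
  have hmuls : ((1:ℂ) + (x:ℂ)^2) ^ (-((1:ℂ)-Δ)) * ((1:ℂ) + (x:ℂ)^2) ^ (-Δ)
      = ((1:ℂ) + (x:ℂ)^2)⁻¹ := by
    rw [← Complex.cpow_add _ _ (one_add_sq_ne x),
      show (-((1:ℂ)-Δ)) + (-Δ) = -1 by ring, Complex.cpow_neg, Complex.cpow_one]
  have e1 : gph x ^ (-n) * gph x ^ m = gph x ^ (m - n) := by
    rw [← zpow_add₀ (gph_ne x)]
    congr 1
    omega
  have hs : ((Real.sqrt (2 * Real.pi) : ℝ):ℂ)⁻¹ * ((Real.sqrt (2 * Real.pi) : ℝ):ℂ)⁻¹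
      = ((2 * Real.pi : ℝ):ℂ)⁻¹ := by
    rw [← mul_inv]
    norm_cast
    rw [Real.mul_self_sqrt (by positivity)]
  have hπ : (Real.pi : ℂ) ≠ 0 := by exact_mod_cast Real.pi_ne_zero
  unfold psi
  rw [map_mul, map_mul, map_mul, map_inv₀, Complex.conj_ofReal, hc2, hcs, hph]
  rw [show (((1:ℂ) - Complex.I * x) / (1 + Complex.I * x)) = gph x from rfl]
  calc ((Real.sqrt (2 * Real.pi) : ℝ):ℂ)⁻¹ * gph x ^ (-n) * (2:ℂ) ^ ((1:ℂ) - Δ)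
        * ((1:ℂ) + (x:ℂ)^2) ^ (-((1:ℂ)-Δ))
        * (((Real.sqrt (2 * Real.pi) : ℝ):ℂ)⁻¹ * gph x ^ m * (2:ℂ) ^ Δ
          * ((1:ℂ) + (x:ℂ)^2) ^ (-Δ))
      = (((Real.sqrt (2 * Real.pi) : ℝ):ℂ)⁻¹ * ((Real.sqrt (2 * Real.pi) : ℝ):ℂ)⁻¹)
        * (gph x ^ (-n) * gph x ^ m) * ((2:ℂ) ^ ((1:ℂ) - Δ) * (2:ℂ) ^ Δ)
        * (((1:ℂ) + (x:ℂ)^2) ^ (-((1:ℂ)-Δ)) * ((1:ℂ) + (x:ℂ)^2) ^ (-Δ)) := by ring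
    _ = ((2 * Real.pi : ℝ):ℂ)⁻¹ * gph x ^ (m - n) * 2 * ((1:ℂ) + (x:ℂ)^2)⁻¹ := by
        rw [hs, e1, hmul2, hmuls]
    _ = (Real.pi : ℂ)⁻¹ * (gph x ^ (m - n) * ((1:ℂ) + (x:ℂ)^2)⁻¹) := by
        rw [show ((2 * Real.pi : ℝ):ℂ) = 2 * (Real.pi : ℂ) by push_cast; ring, mul_inv]
        ring

theorem stmt4 (μ : ℝ) (Δ : ℂ) (hΔ : Δ = 1/2 + Complex.I * μ) (n m : ℤ) :
    Integrable (fun x : ℝ => (starRingEnd ℂ) (psi Δ n x) * psi Δ m x) ∧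
    (∫ x : ℝ, (starRingEnd ℂ) (psi Δ n x) * psi Δ m x) = if n = m then 1 else 0 := by
  have hpt := pointwise μ Δ hΔ n m
  have hπ : (Real.pi : ℂ) ≠ 0 := by exact_mod_cast Real.pi_ne_zero
  constructor
  · exact ((key_integrable (m - n)).const_mul ((Real.pi : ℂ)⁻¹)).congr
      (Eventually.of_forall fun x => (hpt x).symm)
  · rw [integral_congr_ae (Eventually.of_forall hpt), integral_const_mul, key_integral]
    rcases eq_or_ne n m with h | h
    · subst h
      simp [inv_mul_cancel₀ hπ]
    · rw [if_neg (fun hmn => h (by omega)), if_neg h, mul_zero]
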